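/- Let ψ₁, ψ₂ > 0 be real numbers and let n ≥ 1 and 1 ≤ r ≤ t ≤ n be integers. Then the convolution-type sum satisfies the bound Σ_{i=1}^{n} exp(−ψ₂|i−r| − ψ₁|t−i|) ≤ exp(−min(ψ₁,ψ₂)·(t−r)) · [ (t−r+1) + 2·exp(−(ψ₁+ψ₂)) / (1 − exp(−(ψ₁+ψ₂))) ]. -/

import Mathlib

open Real Finset

/-- Bound on the convolution-type sum of two-sided exponential decays. -/
theorem stmt_3 (ψ₁ ψ₂ : ℝ) (hψ₁ : 0 < ψ₁) (hψ₂ : 0 < ψ₂)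
    (n r t : ℕ) (hn : 1 ≤ n) (hr : 1 ≤ r) (hrt : r ≤ t) (htn : t ≤ n) :
    ∑ i ∈ Finset.Icc 1 n,
        Real.exp (-ψ₂ * |(i : ℝ) - (r : ℝ)| - ψ₁ * |(t : ℝ) - (i : ℝ)|) ≤
      Real.exp (-(min ψ₁ ψ₂) * ((t : ℝ) - (r : ℝ))) *
        (((t : ℝ) - (r : ℝ) + 1) +
          2 * Real.exp (-(ψ₁ + ψ₂)) / (1 - Real.exp (-(ψ₁ + ψ₂)))) := by
  have hm1 : min ψ₁ ψ₂ ≤ ψ₁ := min_le_left _ _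
  have hm2 : min ψ₁ ψ₂ ≤ ψ₂ := min_le_right _ _
  set m := min ψ₁ ψ₂ with hm
  set c := ψ₁ + ψ₂ with hc
  have hcpos : 0 < c := by positivity
  set x := Real.exp (-c) with hxdef
  have hx0 : 0 < x := Real.exp_pos _
  have hx1 : x < 1 := by
    rw [hxdef]; exact Real.exp_lt_one_iff.mpr (by linarith)
  have hrt' : (r:ℝ) ≤ (t:ℝ) := by exact_mod_cast hrt
  set E : ℝ := Real.exp (-m * ((t:ℝ) - (r:ℝ))) with hE
  have hEpos : 0 < E := Real.exp_pos _
  -- geometric sum bound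
  have hgeom : ∀ N : ℕ, ∑ j ∈ Finset.Icc 1 N, x ^ j ≤ x / (1 - x) := by
    intro N
    have hxne : x ≠ 1 := ne_of_lt hx1
    have h1 : ∑ j ∈ Finset.Icc 1 N, x ^ j = x * ∑ j ∈ Finset.range N, x ^ j := by
      induction N with
      | zero => simp
      | succ N ih =>
        rw [Finset.sum_Icc_succ_top (by omega : 1 ≤ N + 1), Finset.sum_range_succ, ih]
        ring
    have h2 : ∑ j ∈ Finset.range N, x ^ j ≤ (1 - x)⁻¹ := by
      have hxN : 0 ≤ x ^ N := by positivity
      have h1x : (x ^ N - 1) / (x - 1) = (1 - x ^ N) / (1 - x) := by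
        rw [div_eq_div_iff (by intro h; apply hxne; linarith [sub_eq_zero.mp h])
          (by intro h; nlinarith [sub_eq_zero.mp h])]
        ring
      rw [geom_sum_eq hxne, h1x, ← one_div]
      gcongr
      · linarith
    rw [h1, div_eq_mul_inv]
    exact mul_le_mul_of_nonneg_left h2 hx0.le
  -- split the index set
  have hsplit : Finset.Icc 1 n =
      (Finset.Ico 1 r ∪ Finset.Icc r t) ∪ Finset.Ioc t n := by
    ext i
    simp only [Finset.mem_Icc, Finset.mem_union, Finset.mem_Ico, Finset.mem_Ioc]
    omega
  have hd1 : Disjoint (Finset.Ico 1 r) (Finset.Icc r t) := by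
    rw [Finset.disjoint_left]
    intro a ha hb
    simp only [Finset.mem_Ico] at ha; simp only [Finset.mem_Icc] at hb; omega
  have hd2 : Disjoint (Finset.Ico 1 r ∪ Finset.Icc r t) (Finset.Ioc t n) := by
    rw [Finset.disjoint_left]
    intro a ha hb
    simp only [Finset.mem_union, Finset.mem_Ico, Finset.mem_Icc] at ha
    simp only [Finset.mem_Ioc] at hb; omega
  rw [hsplit, Finset.sum_union hd2, Finset.sum_union hd1]
  -- middle sum
  have hmid : ∑ i ∈ Finset.Icc r t,
      Real.exp (-ψ₂ * |(i : ℝ) - (r : ℝ)| - ψ₁ * |(t : ℝ) - (i : ℝ)|) ≤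
      ((t:ℝ) - (r:ℝ) + 1) * E := by
    have hb : ∀ i ∈ Finset.Icc r t,
        Real.exp (-ψ₂ * |(i : ℝ) - (r : ℝ)| - ψ₁ * |(t : ℝ) - (i : ℝ)|) ≤ E := by
      intro i hi
      simp only [Finset.mem_Icc] at hi
      have h1 : (r:ℝ) ≤ i := by exact_mod_cast hi.1
      have h2 : (i:ℝ) ≤ t := by exact_mod_cast hi.2
      rw [hE]
      apply Real.exp_le_exp.mpr
      rw [abs_of_nonneg (by linarith), abs_of_nonneg (by linarith)]
      nlinarith [mul_le_mul_of_nonneg_right hm1 (by linarith : (0:ℝ) ≤ (t:ℝ) - i),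
        mul_le_mul_of_nonneg_right hm2 (by linarith : (0:ℝ) ≤ (i:ℝ) - r)]
    calc ∑ i ∈ Finset.Icc r t,
        Real.exp (-ψ₂ * |(i : ℝ) - (r : ℝ)| - ψ₁ * |(t : ℝ) - (i : ℝ)|)
        ≤ ∑ _i ∈ Finset.Icc r t, E := Finset.sum_le_sum hb
      _ = ((t:ℝ) - (r:ℝ) + 1) * E := by
          rw [Finset.sum_const, Nat.card_Icc, nsmul_eq_mul]
          congr 1
          push_cast [Nat.sub_add_cancel, hrt]
          have : ((t + 1 - r : ℕ) : ℝ) = (t:ℝ) + 1 - r := by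
            have : r ≤ t + 1 := by omega
            push_cast [this]; ring
          rw [this]; ring
  -- left sum
  have hleft : ∑ i ∈ Finset.Ico 1 r,
      Real.exp (-ψ₂ * |(i : ℝ) - (r : ℝ)| - ψ₁ * |(t : ℝ) - (i : ℝ)|) ≤
      E * (x / (1 - x)) := by
    have hb : ∀ i ∈ Finset.Ico 1 r,
        Real.exp (-ψ₂ * |(i : ℝ) - (r : ℝ)| - ψ₁ * |(t : ℝ) - (i : ℝ)|) ≤
        E * x ^ (r - i) := by
      intro i hi
      simp only [Finset.mem_Ico] at hi
      have h1 : (i:ℝ) ≤ r := by exact_mod_cast hi.2.le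
      have hpow : x ^ (r - i) = Real.exp (-c * ((r:ℝ) - (i:ℝ))) := by
        rw [hxdef, ← Real.exp_nat_mul]
        congr 1
        have hcast : ((r - i : ℕ) : ℝ) = (r:ℝ) - (i:ℝ) := by
          push_cast [hi.2.le]; ring
        rw [hcast]; ring
      rw [hE, hpow, ← Real.exp_add]
      apply Real.exp_le_exp.mpr
      rw [abs_of_nonpos (by linarith : (i:ℝ) - r ≤ 0),
        abs_of_nonneg (by linarith : (0:ℝ) ≤ (t:ℝ) - i)]
      rw [hc]
      nlinarith [mul_le_mul_of_nonneg_right hm1 (by linarith : (0:ℝ) ≤ (t:ℝ) - r)]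
    calc ∑ i ∈ Finset.Ico 1 r,
        Real.exp (-ψ₂ * |(i : ℝ) - (r : ℝ)| - ψ₁ * |(t : ℝ) - (i : ℝ)|)
        ≤ ∑ i ∈ Finset.Ico 1 r, E * x ^ (r - i) := Finset.sum_le_sum hb
      _ = E * ∑ i ∈ Finset.Ico 1 r, x ^ (r - i) := by rw [Finset.mul_sum]
      _ = E * ∑ j ∈ Finset.Icc 1 (r - 1), x ^ j := by
          congr 1
          refine Finset.sum_nbij' (fun i => r - i) (fun j => r - j) ?_ ?_ ?_ ?_ ?_ <;>
            intro a ha <;>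
            simp only [Finset.mem_Ico, Finset.mem_Icc] at * <;> first | omega | rfl
      _ ≤ E * (x / (1 - x)) := mul_le_mul_of_nonneg_left (hgeom _) hEpos.le
  -- right sum
  have hright : ∑ i ∈ Finset.Ioc t n,
      Real.exp (-ψ₂ * |(i : ℝ) - (r : ℝ)| - ψ₁ * |(t : ℝ) - (i : ℝ)|) ≤
      E * (x / (1 - x)) := by
    have hb : ∀ i ∈ Finset.Ioc t n,
        Real.exp (-ψ₂ * |(i : ℝ) - (r : ℝ)| - ψ₁ * |(t : ℝ) - (i : ℝ)|) ≤
        E * x ^ (i - t) := by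
      intro i hi
      simp only [Finset.mem_Ioc] at hi
      have h1 : (t:ℝ) ≤ i := by exact_mod_cast hi.1.le
      have hpow : x ^ (i - t) = Real.exp (-c * ((i:ℝ) - (t:ℝ))) := by
        rw [hxdef, ← Real.exp_nat_mul]
        congr 1
        have hcast : ((i - t : ℕ) : ℝ) = (i:ℝ) - (t:ℝ) := by
          push_cast [hi.1.le]; ring
        rw [hcast]; ring
      rw [hE, hpow, ← Real.exp_add]
      apply Real.exp_le_exp.mpr
      rw [abs_of_nonneg (by linarith : (0:ℝ) ≤ (i:ℝ) - r),
        abs_of_nonpos (by linarith : (t:ℝ) - i ≤ 0)]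
      rw [hc]
      nlinarith [mul_le_mul_of_nonneg_right hm2 (by linarith : (0:ℝ) ≤ (t:ℝ) - r)]
    calc ∑ i ∈ Finset.Ioc t n,
        Real.exp (-ψ₂ * |(i : ℝ) - (r : ℝ)| - ψ₁ * |(t : ℝ) - (i : ℝ)|)
        ≤ ∑ i ∈ Finset.Ioc t n, E * x ^ (i - t) := Finset.sum_le_sum hb
      _ = E * ∑ i ∈ Finset.Ioc t n, x ^ (i - t) := by rw [Finset.mul_sum]
      _ = E * ∑ j ∈ Finset.Icc 1 (n - t), x ^ j := by
          congr 1
          refine Finset.sum_nbij' (fun i => i - t) (fun j => t + j) ?_ ?_ ?_ ?_ ?_ <;>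
            intro a ha <;>
            simp only [Finset.mem_Ioc, Finset.mem_Icc] at * <;> first | omega | (congr 1; omega)
      _ ≤ E * (x / (1 - x)) := mul_le_mul_of_nonneg_left (hgeom _) hEpos.le
  have hfinal : E * (x / (1 - x)) + (((t:ℝ) - (r:ℝ) + 1) * E) + E * (x / (1 - x)) =
      E * (((t:ℝ) - (r:ℝ) + 1) + 2 * x / (1 - x)) := by ring
  linarith [hleft, hmid, hright]
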